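/- If a chain [b_1,…,b_t] of class T_0 satisfies b_j = 2 for all j > i and b_i ≥ 3 with i ≥ 2, then b_1 = (t − i) + 2, and moreover [b_1 − (t−i), b_2, …, b_i] = [2, b_2, …, b_i] is again of class T_0 after replacing b_i by b_i (i.e., the chain [b_1−(t−i), b_2, …, b_i] is of class T_0). -/

import Mathlib

/-- Hirzebruch–Jung continued fraction of a list: `hj [b₁,…,bᵣ] = b₁ - 1/hj [b₂,…,bᵣ]`. -/
def hj : List ℚ → ℚ
  | [] => 0
  | [b] => b
  | b :: l => b - 1 / hj l


/-- A chain of integers ≥ 2 is of class T₀ if its HJ continued fraction equals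
`n²/(na-1)` for some coprime integers `n > a ≥ 1`. -/
def IsClassT0 (l : List ℤ) : Prop :=
  (∀ b ∈ l, 2 ≤ b) ∧ ∃ n a : ℤ, 1 ≤ a ∧ a < n ∧ Int.gcd n a = 1 ∧
    hj (l.map (fun b => (b : ℚ))) = (n ^ 2 : ℚ) / (n * a - 1)

namespace T0aux

def Cm : List ℤ → Matrix (Fin 2) (Fin 2) ℤ
  | [] => 1
  | b :: l => !![b, -1; 1, 0] * Cm l

def Pc (l : List ℤ) : ℤ := Cm l 0 0
def Qc (l : List ℤ) : ℤ := Cm l 1 0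
def Rc (l : List ℤ) : ℤ := -Cm l 0 1
def Sc (l : List ℤ) : ℤ := -Cm l 1 1

@[simp] lemma Pc_nil : Pc [] = 1 := rfl
@[simp] lemma Qc_nil : Qc [] = 0 := rfl
@[simp] lemma Rc_nil : Rc [] = 0 := by simp [Rc, Cm, Matrix.one_apply]
@[simp] lemma Sc_nil : Sc [] = -1 := by simp [Sc, Cm, Matrix.one_apply]

lemma Pc_cons (b : ℤ) (l : List ℤ) : Pc (b :: l) = b * Pc l - Qc l := by
  simp [Pc, Qc, Cm, Matrix.mul_apply, Fin.sum_univ_two]; ring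
lemma Qc_cons (b : ℤ) (l : List ℤ) : Qc (b :: l) = Pc l := by
  simp [Pc, Qc, Cm, Matrix.mul_apply, Fin.sum_univ_two]
lemma Rc_cons (b : ℤ) (l : List ℤ) : Rc (b :: l) = b * Rc l - Sc l := by
  simp [Rc, Sc, Cm, Matrix.mul_apply, Fin.sum_univ_two]; ring
lemma Sc_cons (b : ℤ) (l : List ℤ) : Sc (b :: l) = Rc l := by
  simp [Rc, Sc, Cm, Matrix.mul_apply, Fin.sum_univ_two]

lemma Cm_append (l l' : List ℤ) : Cm (l ++ l') = Cm l * Cm l' := by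
  induction l with
  | nil => simp [Cm]
  | cons b l ih => simp [Cm, ih, Matrix.mul_assoc]

lemma Pc_append (l l' : List ℤ) : Pc (l ++ l') = Pc l * Pc l' - Rc l * Qc l' := by
  simp [Pc, Rc, Qc, Cm_append, Matrix.mul_apply, Fin.sum_univ_two]
lemma Qc_append (l l' : List ℤ) : Qc (l ++ l') = Qc l * Pc l' - Sc l * Qc l' := by
  simp [Qc, Sc, Pc, Cm_append, Matrix.mul_apply, Fin.sum_univ_two]
lemma Rc_append (l l' : List ℤ) : Rc (l ++ l') = Pc l * Rc l' - Rc l * Sc l' := by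
  simp [Rc, Pc, Sc, Cm_append, Matrix.mul_apply, Fin.sum_univ_two]; ring
lemma Sc_append (l l' : List ℤ) : Sc (l ++ l') = Qc l * Rc l' - Sc l * Sc l' := by
  simp [Sc, Qc, Rc, Cm_append, Matrix.mul_apply, Fin.sum_univ_two]; ring

lemma Cm_det (l : List ℤ) : (Cm l).det = 1 := by
  induction l with
  | nil => simp [Cm]
  | cons b l ih => rw [Cm, Matrix.det_mul, ih, Matrix.det_fin_two]; simp

lemma det_entries (l : List ℤ) : Rc l * Qc l - Pc l * Sc l = 1 := by
  have := Cm_det l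
  rw [Matrix.det_fin_two] at this
  simp only [Pc, Qc, Rc, Sc]
  linarith

lemma rep2 (j : ℕ) : Pc (List.replicate j 2) = (j : ℤ) + 1 ∧ Qc (List.replicate j 2) = (j : ℤ)
    ∧ Rc (List.replicate j 2) = (j : ℤ) ∧ Sc (List.replicate j 2) = (j : ℤ) - 1 := by
  induction j with
  | zero => simp
  | succ j ih =>
    obtain ⟨h1, h2, h3, h4⟩ := ih
    rw [List.replicate_succ]
    refine ⟨?_, ?_, ?_, ?_⟩ <;>
      simp [Pc_cons, Qc_cons, Rc_cons, Sc_cons, h1, h2, h3, h4] <;> push_cast <;> ring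

end T0aux

namespace T0aux

lemma invariant : ∀ l : List ℤ, (∀ b ∈ l, 2 ≤ b) → l ≠ [] →
    0 ≤ Sc l ∧ Sc l ≤ Rc l ∧ Sc l + 1 ≤ Qc l ∧ Qc l + 1 ≤ Pc l ∧
      1 ≤ Qc l - Sc l ∧ Qc l - Sc l ≤ Pc l - Rc l ∧ 1 ≤ Rc l := by
  intro l
  induction l with
  | nil => intro _ h; exact absurd rfl h
  | cons b l ih =>
    intro hmem _
    have hb : 2 ≤ b := hmem b (by simp)
    rcases eq_or_ne l [] with rfl | hl
    · simp [Pc_cons, Qc_cons, Rc_cons, Sc_cons]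
      omega
    · obtain ⟨i1, i2, i3, i4, i5, i6, i7⟩ := ih (fun c hc => hmem c (by simp [hc])) hl
      rw [Pc_cons, Qc_cons, Rc_cons, Sc_cons]
      refine ⟨by linarith, by nlinarith, by linarith, by nlinarith, by linarith,
        by nlinarith, by nlinarith⟩

lemma Pc_pos (l : List ℤ) (h : ∀ b ∈ l, 2 ≤ b) : 1 ≤ Pc l := by
  rcases eq_or_ne l [] with rfl | hl
  · simp
  · obtain ⟨i1, i2, i3, i4, _⟩ := invariant l h hl
    linarith

lemma map_cast_eq (l : List ℤ) :
    (l.map (fun b => (b : ℚ))) = l.map (fun b : ℤ => (b : ℚ)) := by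
  induction l with
  | nil => rfl
  | cons b l ih => simpa using ih

lemma hj_eq : ∀ l : List ℤ, (∀ b ∈ l, 2 ≤ b) →
    hj (l.map (fun b : ℤ => (b : ℚ))) = (Pc l : ℚ) / (Qc l : ℚ) := by
  intro l
  induction l with
  | nil => intro _; simp [hj]
  | cons b l ih =>
    intro hmem
    rcases eq_or_ne l [] with rfl | hl
    · simp [hj, Pc_cons, Qc_cons]
    · have hP : (1 : ℤ) ≤ Pc l := Pc_pos l (fun c hc => hmem c (by simp [hc]))
      have hPQ : (0:ℤ) ≤ Qc l := by
        obtain ⟨i1, i2, i3, _⟩ := invariant l (fun c hc => hmem c (by simp [hc])) hl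
        linarith
      have hP0 : (Pc l : ℚ) ≠ 0 := by positivity
      obtain ⟨c, l', rfl⟩ : ∃ c l', l = c :: l' := by
        cases l with | nil => exact absurd rfl hl | cons c l' => exact ⟨c, l', rfl⟩
      have hstep : hj ((b:ℚ) :: (c :: l').map (fun b : ℤ => (b : ℚ)))
          = (b : ℚ) - 1 / hj ((c :: l').map (fun b : ℤ => (b : ℚ))) := rfl
      rw [List.map_cons, hstep, ih (fun x hx => hmem x (by simp at hx ⊢; tauto))]
      conv_rhs => rw [Pc_cons b, Qc_cons b]
      rw [one_div_div]
      push_cast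
      rw [eq_div_iff hP0, sub_mul, div_mul_cancel₀ _ hP0]

lemma last_big (L : List ℤ) (c : ℤ) (hL : ∀ b ∈ L, 2 ≤ b) (hc : 3 ≤ c) :
    2 * Rc (L ++ [c]) < Pc (L ++ [c]) := by
  have hPc1 : Pc [c] = c := by simp [Pc_cons]
  have hQc1 : Qc [c] = 1 := by simp [Qc_cons]
  have hRc1 : Rc [c] = 1 := by simp [Rc_cons]
  have hSc1 : Sc [c] = 0 := by simp [Sc_cons]
  rw [Pc_append, Rc_append, hPc1, hQc1, hRc1, hSc1]
  rcases eq_or_ne L [] with rfl | hL0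
  · simp; linarith
  · obtain ⟨i1, i2, i3, i4, i5, i6, i7⟩ := invariant L hL hL0
    nlinarith

lemma coprime_PQ (l : List ℤ) : IsCoprime (Pc l) (Qc l) := by
  exact ⟨-Sc l, Rc l, by linear_combination det_entries l⟩

lemma frac_eq {p q p' q' : ℤ} (hq : 0 < q) (hq' : 0 < q')
    (h : IsCoprime p q) (h' : IsCoprime p' q')
    (heq : (p:ℚ)/q = (p':ℚ)/q') : p = p' ∧ q = q' := by
  have hq0 : (q:ℚ) ≠ 0 := by positivity
  have hq'0 : (q':ℚ) ≠ 0 := by positivity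
  have hcross : p * q' = p' * q := by
    have := (div_eq_div_iff hq0 hq'0).mp heq
    exact_mod_cast this
  have h1 : q ∣ q' := by
    have : q ∣ p * q' := ⟨p', by linarith [hcross]⟩
    exact (h.symm).dvd_of_dvd_mul_left this
  have h2 : q' ∣ q := by
    have : q' ∣ p' * q := ⟨p, by linarith [hcross]⟩
    exact (h'.symm).dvd_of_dvd_mul_left this
  have hqq : q = q' := Int.dvd_antisymm (le_of_lt hq) (le_of_lt hq') h1 h2
  refine ⟨?_, hqq⟩
  have : p * q' = p' * q' := by rw [hcross, hqq]
  exact mul_right_cancel₀ (by exact_mod_cast hq'0) this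

end T0aux


namespace T0aux

lemma core (b1 v w r s n a : ℤ) (m : ℕ)
    (i1 : 0 ≤ s) (i2 : s ≤ r) (i3 : s + 1 ≤ w) (i4 : w + 1 ≤ v)
    (i5 : 1 ≤ w - s) (i6 : w - s ≤ v - r) (i7 : 1 ≤ r)
    (h3 : 2 * r < v)
    (ha1 : 1 ≤ a) (han : a < n) (hco : IsCoprime n a)
    (hE2 : v * ((m:ℤ)+1) - r * m = n * a - 1)
    (hE1 : b1 * (v*((m:ℤ)+1) - r*m) - (w*((m:ℤ)+1) - s*m) = n^2)
    (hDET : (b1 * (v*(m:ℤ) - r*((m:ℤ)-1)) - (w*(m:ℤ) - s*((m:ℤ)-1))) * (v*((m:ℤ)+1) - r*m)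
        - (b1 * (v*((m:ℤ)+1) - r*m) - (w*((m:ℤ)+1) - s*m)) * (v*(m:ℤ) - r*((m:ℤ)-1)) = 1) :
    b1 = (m:ℤ) + 2 ∧ (b1 - m) * v - w = (n - m*a)^2 ∧ v = (n - m*a)*a - 1 ∧
      a < n - m*a ∧ IsCoprime (n - m*a) a := by
  have hm0 : (0:ℤ) ≤ (m:ℤ) := Int.natCast_nonneg m
  set mz : ℤ := (m:ℤ) with hmz
  have hstar : n^2 * (v - r) - (n*a - 1) * (b1*(v-r) - (w-s)) = 1 := by
    linear_combination hDET - (v - r)*hE1 + (b1*(v-r) - (w-s))*hE2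
  have hA : v + mz*(v - r) = n*a - 1 := by linear_combination hE2
  have hvr0 : (0:ℤ) ≤ v - r := by linarith
  have hmvr : (0:ℤ) ≤ mz * (v - r) := mul_nonneg hm0 hvr0
  have hna3 : 3 ≤ n * a := by linarith
  have hD1 : 1 ≤ v - r := by linarith
  have hDlt : v - r < n*a - 1 := by linarith
  have haa : 2 ≤ a * (n - a) := by
    rcases lt_or_ge a 2 with h | h
    · have ha1' : a = 1 := by omega
      rw [ha1'] at hna3 ⊢
      linarith
    · have hna' : (1:ℤ) ≤ n - a := by linarith
      have := mul_le_mul h hna' (by linarith) (by linarith)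
      linarith
  have ha2lt : a^2 < n*a - 1 := by linarith [haa]
  have hconn : IsCoprime n (n*a - 1) := ⟨a, -1, by ring⟩
  have hco2 : IsCoprime (n*a - 1) (n^2) := (hconn.pow_left).symm
  have hdvd : (n*a - 1) ∣ (v - r - a^2) := by
    refine hco2.dvd_of_dvd_mul_left ⟨(b1*(v-r) - (w-s)) - (n*a + 1), ?_⟩
    linear_combination hstar
  have hDa : v - r = a^2 := by
    obtain ⟨c, hc⟩ := hdvd
    have ha2pos : (1:ℤ) ≤ a^2 := by linarith [mul_self_nonneg (a-1), ha1]
    have hb1' : (n*a - 1) * c < (n*a - 1) * 1 := by rw [mul_one]; linarith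
    have hb2' : (n*a - 1) * (-1) < (n*a - 1) * c := by
      have : -(n*a-1) < v - r - a^2 := by linarith
      linarith [hc]
    have hc1 : c < 1 := lt_of_mul_lt_mul_left hb1' (by linarith)
    have hc2 : -1 < c := lt_of_mul_lt_mul_left hb2' (by linarith)
    have hc0 : c = 0 := by omega
    rw [hc0, mul_zero] at hc
    linarith
  have hX : b1 * (v - r) - (w - s) = n*a + 1 := by
    have h0 : (n*a - 1) * (b1*(v-r) - (w-s)) = (n*a-1) * (n*a+1) := by
      linear_combination n^2 * hDa - hstar
    exact mul_left_cancel₀ (by intro h; linarith [hna3, h] : (n*a - 1) ≠ (0:ℤ)) h0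
  have hv : v = n*a - 1 - mz * a^2 := by linear_combination hA - mz*hDa
  have hr : r = n*a - 1 - (mz+1)*a^2 := by linear_combination hv - hDa
  have hnma : (mz+1)*a + 1 ≤ n := by
    have heq' : a * (n - (mz+1)*a) = r + 1 := by linear_combination -hr
    have h2' : 2 ≤ a * (n - (mz+1)*a) := by linarith
    have h2'' : 1 ≤ n - (mz+1)*a := by
      by_contra hcon
      push_neg at hcon
      have hle0 : n - (mz+1)*a ≤ 0 := by linarith
      have := mul_le_mul_of_nonneg_left hle0 (show (0:ℤ) ≤ a by linarith)
      rw [mul_zero] at this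
      linarith
    linarith
  have hle : n*a ≤ (mz+2)*a^2 := by
    have hlt' : n*a < (mz+2)*a^2 + 1 := by linarith [h3, hv, hr]
    exact Int.lt_add_one_iff.mp hlt'
  have hn_le : n ≤ (mz+2)*a := by
    by_contra hcon
    push_neg at hcon
    have h1 : (mz+2)*a + 1 ≤ n := Int.lt_iff_add_one_le.mp hcon
    have := mul_le_mul_of_nonneg_right h1 (show (0:ℤ) ≤ a by linarith)
    linarith
  have hne : n ≠ (mz+2)*a := by
    intro h
    have hdvd' : a ∣ n := ⟨mz+2, by linear_combination h⟩
    have ha' : IsUnit a := hco.isUnit_of_dvd' hdvd' dvd_rfl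
    have ha1' : a = 1 := by
      rcases Int.isUnit_iff.mp ha' with h1 | h1
      · exact h1
      · omega
    rw [ha1'] at hv h
    have hv1 : v = 1 := by rw [hv, h]; ring
    linarith
  have hnm2 : mz + 2 ≤ n := by
    linarith [mul_le_mul_of_nonneg_left ha1 (show (0:ℤ) ≤ mz+1 by linarith)]
  have hn_lt : n ≤ (mz+2)*a - 1 := by
    have := lt_of_le_of_ne hn_le hne
    omega
  have hlow : (mz+1) * (n*a - 1) < n^2 := by
    have hint := mul_nonneg (show (0:ℤ) ≤ n - (mz+1)*a - 1 by linarith)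
      (show (0:ℤ) ≤ n by linarith)
    linarith [hint, hnm2]
  have hup : n^2 < (mz+2) * (n*a - 1) := by
    have hne2 : n^2 ≠ (mz+2)*(n*a-1) := by
      intro h
      have hdvd2 : (n*a - 1) ∣ n^2 := ⟨mz+2, by linear_combination h⟩
      have hu : IsUnit (n*a - 1) := hco2.isUnit_of_dvd' dvd_rfl hdvd2
      rcases Int.isUnit_iff.mp hu with h1 | h1 <;> linarith [hna3]
    have hle2 : n^2 ≤ (mz+2)*(n*a-1) := by
      have hint := mul_nonneg (show (0:ℤ) ≤ (mz+2)*a - 1 - n by linarith)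
        (show (0:ℤ) ≤ n by linarith)
      linarith [hint, hnm2]
    exact lt_of_le_of_ne hle2 hne2
  have hws0 : (0:ℤ) ≤ mz * (w - s) := mul_nonneg hm0 (by linarith)
  have hB1 : 1 ≤ w + mz*(w-s) := by linarith
  have hBA : w + mz*(w-s) < v + mz*(v-r) := by
    have := mul_le_mul_of_nonneg_left i6 hm0
    linarith
  have hA1 : 1 ≤ v + mz*(v - r) := by linarith
  have e1' : b1 * (v + mz*(v-r)) = n^2 + (w + mz*(w-s)) := by linear_combination hE1
  have hb1 : b1 = mz + 2 := by
    have hgt : mz + 2 ≤ b1 := by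
      by_contra hcon
      push_neg at hcon
      have hb : b1 ≤ mz + 1 := by omega
      have := mul_le_mul_of_nonneg_right hb (show (0:ℤ) ≤ v + mz*(v-r) by linarith)
      rw [e1'] at this
      rw [hA] at this
      linarith
    have hlt : b1 ≤ mz + 2 := by
      by_contra hcon
      push_neg at hcon
      have hb : mz + 3 ≤ b1 := by omega
      have := mul_le_mul_of_nonneg_right hb (show (0:ℤ) ≤ v + mz*(v-r) by linarith)
      rw [e1'] at this
      rw [hA] at this
      linarith
    omega
  refine ⟨hb1, ?_, ?_, ?_, ?_⟩
  · linear_combination hE1 - mz*hX - mz*hv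
  · linear_combination hv
  · linarith [hnma]
  · have := hco.add_mul_left_left (-mz)
    rwa [show n + a * (-mz) = n - mz*a by ring] at this

end T0aux

open T0aux

open T0aux

/-- If a chain [b₁,…,b_t] of class T₀ has b_{k+1} ≥ 3 (0-based index k ≥ 1)
and all later entries equal to 2, then b₁ = (t-1-k) + 2, and the chain
[b₁-(t-1-k), b₂, …, b_{k+1}] (i.e. [2, b₂, …, b_{k+1}]) is again of class T₀. -/
theorem stmt_5 (l : List ℤ) (hT0 : IsClassT0 l) (k : ℕ)
    (hk1 : 1 ≤ k) (hk2 : k < l.length)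
    (hbi : 3 ≤ l[k]!) (h2 : ∀ j, k < j → j < l.length → l[j]! = 2) :
    l[0]! = ((l.length - 1 - k : ℕ) : ℤ) + 2 ∧
      IsClassT0 ((l[0]! - ((l.length - 1 - k : ℕ) : ℤ)) :: (l.tail.take k)) := by
  obtain ⟨hmem, n, a, ha1, han, hgcd, hhj⟩ := hT0
  obtain ⟨b1, l2, rfl⟩ : ∃ b1 l2, l = b1 :: l2 := by
    cases l with
    | nil => simp at hk2
    | cons x xs => exact ⟨x, xs, rfl⟩
  have hlen : k ≤ l2.length := by
    have := hk2
    simp at this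
    omega
  set m : ℕ := l2.length - k with hmdef
  set M : List ℤ := l2.take k with hMdef
  have hMlen : M.length = k := by
    rw [hMdef, List.length_take]
    omega
  have hmlen : (b1 :: l2).length - 1 - k = m := by simp [hmdef]
  have h0 : (b1 :: l2)[0]! = b1 := List.getElem!_cons_zero
  -- the tail of l is M followed by m twos
  have hdrop : l2.drop k = List.replicate m 2 := by
    rw [List.eq_replicate_iff]
    constructor
    · simp [hmdef]
    · intro b hb
      rw [List.mem_iff_getElem] at hb
      obtain ⟨i, hi, hbi'⟩ := hb
      rw [List.getElem_drop] at hbi'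
      have hki : k + i < l2.length := by
        simp at hi
        omega
      have hlt : k + 1 + i < (b1 :: l2).length := by
        simp
        omega
      have hval := h2 (k + 1 + i) (by omega) hlt
      have hidx : k + 1 + i = (k + i) + 1 := by omega
      rw [hidx, List.getElem!_cons_succ, getElem!_pos l2 (k+i) hki] at hval
      rw [← hbi', ← hval]
  have hl2 : l2 = M ++ List.replicate m 2 := by
    conv_lhs => rw [← List.take_append_drop k l2]
    rw [← hMdef, hdrop]
  have hMne : M ≠ [] := by
    intro h
    rw [h] at hMlen
    simp at hMlen
    omega
  have hmemM : ∀ b ∈ M, 2 ≤ b := by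
    intro b hb
    exact hmem b (List.mem_cons_of_mem _ (List.mem_of_mem_take (hMdef ▸ hb)))
  -- last entry of M is l[k] ≥ 3
  have hkk : k - 1 < l2.length := by omega
  have hc3 : 3 ≤ l2[k-1]'hkk := by
    have hidx : k = (k-1)+1 := by omega
    rw [hidx, List.getElem!_cons_succ, getElem!_pos l2 (k-1) hkk] at hbi
    exact hbi
  have e1 : M.getLast hMne = M[M.length - 1]! := by
    rw [getElem!_pos M (M.length - 1) (by omega)]
    exact List.getLast_eq_getElem _
  have e2 : M[M.length - 1]! = M[k-1]! := by rw [hMlen]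
  have e3 : M[k-1]! = l2[k-1]! := by
    rw [getElem!_pos M (k-1) (by omega), getElem!_pos l2 (k-1) hkk]
    exact List.getElem_take
  have e4 : 3 ≤ M.getLast hMne := by
    rw [e1, e2, e3, getElem!_pos l2 (k-1) hkk]
    exact hc3
  have h3 : 2 * Rc M < Pc M := by
    rw [← List.dropLast_concat_getLast hMne]
    exact last_big M.dropLast _ (fun b hb => hmemM b (List.mem_of_mem_dropLast hb)) e4
  obtain ⟨i1, i2, i3, i4, i5, i6, i7⟩ := invariant M hmemM hMne
  -- extract Pc l = n², Qc l = na - 1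
  rw [map_cast_eq, hj_eq _ hmem] at hhj
  have hco : IsCoprime n a := Int.isCoprime_iff_gcd_eq_one.mpr hgcd
  have hn2 : 2 ≤ n := by linarith
  have hnapos : 0 < n*a - 1 := by
    have := mul_le_mul hn2 ha1 zero_le_one (by linarith : (0:ℤ) ≤ n)
    linarith
  have hconn0 : IsCoprime n (n*a - 1) := ⟨a, -1, by ring⟩
  have hconn : IsCoprime (n^2) (n*a - 1) := hconn0.pow_left
  obtain ⟨j1, j2, j3, j4, j5, j6, j7⟩ := invariant (b1 :: l2) hmem (by simp)
  have hQpos : 0 < Qc (b1 :: l2) := by linarith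
  have heq2 : (Pc (b1 :: l2) : ℚ)/(Qc (b1 :: l2)) = ((n^2 : ℤ) : ℚ)/(((n*a - 1 : ℤ)) : ℚ) := by
    rw [hhj]
    push_cast
    ring
  obtain ⟨hPl, hQl⟩ := frac_eq hQpos hnapos (coprime_PQ _) hconn heq2
  -- expand via decomposition
  obtain ⟨hp, hq, hr', hs'⟩ := rep2 m
  have hPrest : Pc (M ++ List.replicate m 2) = Pc M * ((m:ℤ)+1) - Rc M * (m:ℤ) := by
    rw [Pc_append, hp, hq]
  have hQrest : Qc (M ++ List.replicate m 2) = Qc M * ((m:ℤ)+1) - Sc M * (m:ℤ) := by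
    rw [Qc_append, hp, hq]
  have hRrest : Rc (M ++ List.replicate m 2) = Pc M * (m:ℤ) - Rc M * ((m:ℤ)-1) := by
    rw [Rc_append, hr', hs']
  have hSrest : Sc (M ++ List.replicate m 2) = Qc M * (m:ℤ) - Sc M * ((m:ℤ)-1) := by
    rw [Sc_append, hr', hs']
  rw [hl2] at hPl hQl
  rw [Pc_cons, hPrest, hQrest] at hPl
  rw [Qc_cons, hPrest] at hQl
  have hdetl := det_entries (b1 :: (M ++ List.replicate m 2))
  rw [Rc_cons, Sc_cons, Qc_cons, Pc_cons, hPrest, hQrest, hRrest, hSrest] at hdetl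
  obtain ⟨hb1, hP', hQ', hlt', hco'⟩ :=
    core b1 (Pc M) (Qc M) (Rc M) (Sc M) n a m i1 i2 i3 i4 i5 i6 i7 h3 ha1 han hco hQl hPl hdetl
  have hmem' : ∀ b ∈ ((b1 - (m:ℤ)) :: M), 2 ≤ b := by
    intro b hb
    rcases List.mem_cons.mp hb with hb | hb
    · rw [hb, hb1]
      omega
    · exact hmemM b hb
  constructor
  · rw [h0, hmlen]
    exact hb1
  · rw [h0, hmlen, List.tail_cons, ← hMdef]
    refine ⟨hmem', n - (m:ℤ)*a, a, ha1, hlt', Int.isCoprime_iff_gcd_eq_one.mp hco', ?_⟩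
    rw [map_cast_eq, hj_eq _ hmem', Pc_cons, Qc_cons, hP', hQ']
    push_cast
    ring
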